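/- Let N be a binary unrooted phylogenetic network with a cherry {x,y}, and let N' be the network obtained by reducing the cherry {x,y} to a leaf z. Then N is the unique network (up to isomorphism fixing leaf labels) realizing its shortest distance matrix if and only if N' is the unique network realizing its shortest distance matrix. -/

import Mathlib

open SimpleGraph

/-- The degree of a vertex (defined without decidability assumptions). -/
noncomputable def gdeg {V : Type} (G : SimpleGraph V) (v : V) : ℕ :=
  {u | G.Adj v u}.ncard

/-- The longest distance between two vertices: the supremum of the lengths of
paths between them. -/
noncomputable def ldistV {V : Type} (G : SimpleGraph V) (u v : V) : ℕ :=
  sSup {n | ∃ p : G.Walk u v, p.IsPath ∧ p.length = n}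

/-- A binary unrooted phylogenetic network on the leaf-label set `X`:
a simple connected graph whose degree-1 vertices (the leaves) are bijectively
labelled by `X`, every other vertex having degree 3, with at least two leaves. -/
structure PhyloNet (V X : Type) where
  G : SimpleGraph V
  conn : G.Connected
  leaf : X → V
  leafInj : Function.Injective leaf
  leafDeg : ∀ x : X, gdeg G (leaf x) = 1
  internalDeg : ∀ v : V, v ∉ Set.range leaf → gdeg G v = 3
  leafSurj : ∀ v : V, gdeg G v = 1 → v ∈ Set.range leaf
  twoLeaves : Nontrivial X

namespace PhyloNet

variable {V W X : Type}

/-- Shortest distance between two leaves. -/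
noncomputable def dm (N : PhyloNet V X) (x y : X) : ℕ :=
  N.G.dist (N.leaf x) (N.leaf y)

/-- Longest distance between two leaves. -/
noncomputable def dl (N : PhyloNet V X) (x y : X) : ℕ :=
  ldistV N.G (N.leaf x) (N.leaf y)

/-- Two networks on the same label set realize the same shortest distance matrix. -/
def SameDist (N : PhyloNet V X) (M : PhyloNet W X) : Prop :=
  ∀ x y : X, N.dm x y = M.dm x y

/-- Two networks realize the same longest distance matrix. -/
def SameLDist (N : PhyloNet V X) (M : PhyloNet W X) : Prop :=
  ∀ x y : X, N.dl x y = M.dl x y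

/-- Label-preserving isomorphism of networks. -/
def Isom (N : PhyloNet V X) (M : PhyloNet W X) : Prop :=
  ∃ φ : N.G ≃g M.G, ∀ x : X, φ (N.leaf x) = M.leaf x

/-- `N` is reconstructible from its shortest distance matrix. -/
def Reconstructible (N : PhyloNet V X) : Prop :=
  ∀ (W : Type) (M : PhyloNet W X), N.SameDist M → N.Isom M

/-- Two leaves form a cherry: they share a common neighbour. -/
def Cherry (N : PhyloNet V X) (x y : X) : Prop :=
  x ≠ y ∧ ∃ v : V, N.G.Adj (N.leaf x) v ∧ N.G.Adj (N.leaf y) v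

def NoCherry (N : PhyloNet V X) : Prop := ∀ x y : X, ¬ N.Cherry x y

/-- `uv` is a cut-edge. -/
def IsCutEdge (N : PhyloNet V X) (u v : V) : Prop :=
  N.G.Adj u v ∧ ¬ (N.G.deleteEdges {s(u, v)}).Reachable u v

/-- Leaf `x` lies on the `u`-side of the cut-edge `uv`. -/
def leafSide (N : PhyloNet V X) (u v : V) (x : X) : Prop :=
  (N.G.deleteEdges {s(u, v)}).Reachable (N.leaf x) u

/-- `A` is a part of a cut-edge induced split of `N`. -/
def IsSplitPart (N : PhyloNet V X) (A : Set X) : Prop :=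
  ∃ u v : V, N.IsCutEdge u v ∧ ∀ x : X, N.leafSide u v x ↔ x ∈ A

/-- Every cut-edge of `N` induces a unique split. -/
def UniqueSplits (N : PhyloNet V X) : Prop :=
  ∀ u v u' v' : V, N.IsCutEdge u v → N.IsCutEdge u' v' →
    ((∀ x : X, N.leafSide u v x ↔ N.leafSide u' v' x) ∨
      (∀ x : X, N.leafSide u v x ↔ N.leafSide v' u' x)) →
    s(u, v) = s(u', v')

/-- `l` is a chain of leaves: the neighbours of its members form a path. -/
def IsChain (N : PhyloNet V X) (l : List X) : Prop :=
  l ≠ [] ∧ ∃ vs : List V, ∃ h : vs.length = l.length,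
    vs.Nodup ∧ List.Chain' N.G.Adj vs ∧
    ∀ (i : ℕ) (hi : i < l.length),
      N.G.Adj (N.leaf (l.get ⟨i, hi⟩)) (vs.get ⟨i, by omega⟩)

/-- A maximal chain: not a subsequence of any other chain. -/
def MaxChain (N : PhyloNet V X) (l : List X) : Prop :=
  N.IsChain l ∧ ∀ m : List X, N.IsChain m → l.Sublist m → m = l

end PhyloNet

/-- A set of at least three vertices is 2-connected if it induces a connected
graph that stays connected after removal of any single vertex. -/
def TwoConn {V : Type} (G : SimpleGraph V) (B : Set V) : Prop :=
  3 ≤ B.ncard ∧ (G.induce B).Connected ∧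
    ∀ v ∈ B, (G.induce (B \ {v})).Connected

/-- A blob: a maximal 2-connected set of vertices (with at least three vertices). -/
def IsBlob {V : Type} (G : SimpleGraph V) (B : Set V) : Prop :=
  TwoConn G B ∧ ∀ C : Set V, TwoConn G C → B ⊆ C → C = B

/-- Number of edges with both endpoints in `B`. -/
noncomputable def edgesIn {V : Type} (G : SimpleGraph V) (B : Set V) : ℕ :=
  {e : Sym2 V | e ∈ G.edgeSet ∧ ∀ v ∈ e, v ∈ B}.ncard

/-- `G` is a level-(≤ k) network: every blob has cycle rank at most `k`,
i.e. removing at most `k` edges from each blob yields a tree. -/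
def LevelLE {V : Type} (G : SimpleGraph V) (k : ℕ) : Prop :=
  ∀ B : Set V, IsBlob G B → edgesIn G B ≤ (B.ncard - 1) + k

namespace PhyloNet

variable {V X : Type}

/-- A trivial cut-edge is one incident to a leaf. -/
def TrivialCutEdge (N : PhyloNet V X) (u v : V) : Prop :=
  u ∈ Set.range N.leaf ∨ v ∈ Set.range N.leaf

/-- A pendant blob: a blob incident to exactly one non-trivial cut-edge. -/
def IsPendantBlob (N : PhyloNet V X) (B : Set V) : Prop :=
  IsBlob N.G B ∧
    ∃! e : Sym2 V, ∃ u v : V, e = s(u, v) ∧ u ∈ B ∧ v ∉ B ∧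
      N.G.Adj u v ∧ ¬ N.TrivialCutEdge u v

/-- The leaves attached to (contained in) a blob. -/
def blobLeaves (N : PhyloNet V X) (B : Set V) : Set X :=
  {x : X | ∃ u ∈ B, N.G.Adj (N.leaf x) u}

/-- `N` has a leaf on each generator side: every vertex is within shortest
distance 2 of some leaf. -/
def LeafOnEachGenSide (N : PhyloNet V X) : Prop :=
  ∀ v : V, ∃ x : X, N.G.dist v (N.leaf x) ≤ 2

end PhyloNet


section Generic
variable {V W : Type} {G : SimpleGraph V} {H : SimpleGraph W}

/-- An internal vertex of a path has two distinct neighbours. -/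
theorem two_nbrs {u w : V} (p : G.Walk u w) (hp : p.IsPath) {c : V}
    (hc : c ∈ p.support) (hu : c ≠ u) (hw : c ≠ w) :
    ∃ d e, d ≠ e ∧ G.Adj c d ∧ G.Adj c e := by
  induction p with
  | nil => simp at hc; exact absurd hc hu
  | @cons a m b h p ih =>
    rw [SimpleGraph.Walk.support_cons] at hc
    rcases List.mem_cons.mp hc with h1 | h2
    · exact absurd h1 hu
    · by_cases hcm : c = m
      · subst hcm
        cases p with
        | nil => exact absurd rfl hw
        | @cons _ e _ h2' p' =>
          refine ⟨a, e, ?_, h.symm, h2'⟩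
          intro hae
          have hnp : a ∉ (SimpleGraph.Walk.cons h2' p').support :=
            (SimpleGraph.Walk.cons_isPath_iff _ _).mp hp |>.2
          apply hnp
          rw [SimpleGraph.Walk.support_cons, hae]
          exact List.mem_cons_of_mem _ (SimpleGraph.Walk.start_mem_support _)
      · exact ih hp.of_cons h2 hcm hw

/-- Project a walk whose support lies in the range of an embedding. -/
theorem proj_walk (f : G ↪g H) {u w : W} (p : H.Walk u w)
    (hs : ∀ c ∈ p.support, c ∈ Set.range f) :
    ∀ a b, f a = u → f b = w → ∃ q : G.Walk a b, q.length = p.length := by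
  induction p with
  | nil =>
    intro a b ha hb
    have : a = b := f.injective (ha.trans hb.symm)
    subst this; exact ⟨SimpleGraph.Walk.nil, rfl⟩
  | @cons u' m w' h p ih =>
    intro a b ha hb
    obtain ⟨d, hd⟩ := hs m (by
      rw [SimpleGraph.Walk.support_cons]
      exact List.mem_cons_of_mem _ (SimpleGraph.Walk.start_mem_support _))
    have hadj : G.Adj a d := f.map_adj_iff.mp (by rw [ha, hd]; exact h)
    obtain ⟨q, hq⟩ := ih (fun c' hc' => hs c'
      (by rw [SimpleGraph.Walk.support_cons]; exact List.mem_cons_of_mem _ hc')) d b hd hb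
    exact ⟨SimpleGraph.Walk.cons hadj q, by simp [hq]⟩

variable (f : G ↪g H)
  (hsmall : ∀ c, c ∉ Set.range f → ∀ d e, H.Adj c d → H.Adj c e → d = e)

include hsmall in
theorem reach_embed {a b : V} (hr : H.Reachable (f a) (f b)) : G.Reachable a b := by
  obtain ⟨p, hp, _⟩ := hr.exists_path_of_dist
  have hs : ∀ c ∈ p.support, c ∈ Set.range f := by
    intro c hc
    by_contra hcr
    by_cases hc1 : c = f a
    · exact hcr ⟨a, hc1.symm⟩
    by_cases hc2 : c = f b
    · exact hcr ⟨b, hc2.symm⟩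
    obtain ⟨d, e, hde, hd, he⟩ := two_nbrs p hp hc hc1 hc2
    exact hde (hsmall c hcr d e hd he)
  obtain ⟨q, _⟩ := proj_walk f p hs a b rfl rfl
  exact ⟨q⟩

include hsmall in
theorem dist_embed {a b : V} (hr : H.Reachable (f a) (f b)) :
    H.dist (f a) (f b) = G.dist a b := by
  obtain ⟨p, hp, hl⟩ := hr.exists_path_of_dist
  have hs : ∀ c ∈ p.support, c ∈ Set.range f := by
    intro c hc
    by_contra hcr
    by_cases hc1 : c = f a
    · exact hcr ⟨a, hc1.symm⟩
    by_cases hc2 : c = f b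
    · exact hcr ⟨b, hc2.symm⟩
    obtain ⟨d, e, hde, hd, he⟩ := two_nbrs p hp hc hc1 hc2
    exact hde (hsmall c hcr d e hd he)
  obtain ⟨q, hq⟩ := proj_walk f p hs a b rfl rfl
  have h1 : G.dist a b ≤ H.dist (f a) (f b) := by
    rw [← hl, ← hq]; exact SimpleGraph.dist_le q
  have h2 : H.dist (f a) (f b) ≤ G.dist a b := by
    obtain ⟨r, _, hrl⟩ := SimpleGraph.Reachable.exists_path_of_dist (⟨q⟩ : G.Reachable a b)
    rw [← hrl]
    have := SimpleGraph.dist_le (r.map f.toHom)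
    rwa [SimpleGraph.Walk.length_map] at this
  omega

omit hsmall

/-- Distance from a pendant vertex. -/
theorem dist_pendant {u v w : V} (hadj : G.Adj u v)
    (huniq : ∀ d, G.Adj u d → d = v) (hw : u ≠ w) (hr : G.Reachable u w) :
    G.dist u w = G.dist v w + 1 := by
  obtain ⟨p, hp, hl⟩ := hr.exists_path_of_dist
  cases p with
  | nil => exact absurd rfl hw
  | cons h q =>
    rename_i m
    have hm : m = v := huniq m h
    subst hm
    have h1 : G.dist m w ≤ q.length := SimpleGraph.dist_le q
    have h2 : G.dist u w ≤ G.dist m w + 1 := by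
      obtain ⟨r, _, hrl⟩ := SimpleGraph.Reachable.exists_path_of_dist (⟨q⟩ : G.Reachable m w)
      have := SimpleGraph.dist_le (SimpleGraph.Walk.cons hadj r)
      simpa [hrl, Nat.add_comm] using this
    have h3 : (SimpleGraph.Walk.cons h q).length = q.length + 1 := by simp
    omega

theorem dist_two {u m w : V} (hu : u ≠ w) (hnadj : ¬ G.Adj u w)
    (h1 : G.Adj u m) (h2 : G.Adj m w) : G.dist u w = 2 := by
  have hle : G.dist u w ≤ 2 := by
    have := SimpleGraph.dist_le (SimpleGraph.Walk.cons h1 (SimpleGraph.Walk.cons h2 SimpleGraph.Walk.nil))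
    simpa using this
  have hr : G.Reachable u w := ⟨SimpleGraph.Walk.cons h1 (SimpleGraph.Walk.cons h2 SimpleGraph.Walk.nil)⟩
  have h0 : G.dist u w ≠ 0 := fun h => hu (hr.dist_eq_zero_iff.mp h)
  have hone : G.dist u w ≠ 1 := fun h => hnadj (SimpleGraph.dist_eq_one_iff_adj.mp h)
  omega

theorem walk_len_two {u w : V} (p : G.Walk u w) (h : p.length = 2) :
    ∃ m, G.Adj u m ∧ G.Adj w m := by
  cases p with
  | nil => simp at h
  | cons h1 q =>
    cases q with
    | nil => simp at h
    | cons h2 q' =>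
      cases q' with
      | nil => exact ⟨_, h1, h2.symm⟩
      | cons h3 q'' => simp at h

theorem uniq_of_gdeg_one {u : V} (h : gdeg G u = 1) :
    ∀ d e, G.Adj u d → G.Adj u e → d = e := by
  obtain ⟨c, hc⟩ := Set.ncard_eq_one.mp h
  intro d e hd he
  have hd' : d ∈ {x | G.Adj u x} := hd
  have he' : e ∈ {x | G.Adj u x} := he
  rw [hc] at hd' he'
  rw [hd', he']

theorem gdeg_ne_one {u d e : V} (hde : d ≠ e) (hd : G.Adj u d) (he : G.Adj u e) :
    gdeg G u ≠ 1 := fun h => hde (uniq_of_gdeg_one h d e hd he)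

end Generic

section Cherry

variable {V X : Type} (P : PhyloNet V X) {x y : X} {v : V}
  (hxy : x ≠ y) (hx : P.G.Adj (P.leaf x) v) (hy : P.G.Adj (P.leaf y) v)

include hxy hx hy

omit hx hy in
theorem ch_lxy : P.leaf x ≠ P.leaf y := fun h => hxy (P.leafInj h)

omit hxy hy in
theorem ch_uvx : ∀ d, P.G.Adj (P.leaf x) d → d = v :=
  fun d hd => uniq_of_gdeg_one (P.leafDeg x) d v hd hx

omit hxy hx in
theorem ch_uvy : ∀ d, P.G.Adj (P.leaf y) d → d = v :=
  fun d hd => uniq_of_gdeg_one (P.leafDeg y) d v hd hy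

omit hxy in
theorem ch_nadjxy : ¬ P.G.Adj (P.leaf x) (P.leaf y) :=
  fun h => hy.ne' ((ch_uvx P hx (P.leaf y) h) ▸ rfl)

theorem ch_dmxy : P.dm x y = 2 :=
  dist_two (ch_lxy P hxy) (ch_nadjxy P hx hy) hx hy.symm

theorem ch_v_not_leaf : v ∉ Set.range P.leaf := by
  rintro ⟨a, rfl⟩
  exact gdeg_ne_one (ch_lxy P hxy) hx.symm hy.symm (P.leafDeg a)

theorem ch_gdeg_v : gdeg P.G v = 3 := P.internalDeg v (ch_v_not_leaf P hxy hx hy)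

omit hxy in
theorem ch_v_mem : v ∈ {w : V | w ≠ P.leaf x ∧ w ≠ P.leaf y} := ⟨hx.ne', hy.ne'⟩

omit hxy hx hy in
theorem ch_leaf_mem {a : X} (ha : a ≠ x) (hb : a ≠ y) :
    P.leaf a ∈ {w : V | w ≠ P.leaf x ∧ w ≠ P.leaf y} :=
  ⟨fun h => ha (P.leafInj h), fun h => hb (P.leafInj h)⟩

omit hxy hx hy
/-- vertices outside the cherry set have a unique neighbour requirement. -/
theorem ch_small : ∀ c, c ∉ {w : V | w ≠ P.leaf x ∧ w ≠ P.leaf y} →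
    ∀ d e, P.G.Adj c d → P.G.Adj c e → d = e := by
  intro c hc d e hd he
  rcases not_and_or.mp hc with h | h
  · rw [not_ne_iff.mp h] at hd he
    exact (uniq_of_gdeg_one (P.leafDeg x) d e hd he)
  · rw [not_ne_iff.mp h] at hd he
    exact (uniq_of_gdeg_one (P.leafDeg y) d e hd he)

end Cherry

section Reduced

variable {V X : Type} (P : PhyloNet V X) {x y : X} {v : V}
  (hxy : x ≠ y) (hx : P.G.Adj (P.leaf x) v) (hy : P.G.Adj (P.leaf y) v)

/-- The embedding of the induced subgraph into the original graph. -/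
def chEmb : (P.G.induce {w : V | w ≠ P.leaf x ∧ w ≠ P.leaf y}) ↪g P.G where
  toFun := Subtype.val
  inj' := Subtype.val_injective
  map_rel_iff' := Iff.rfl

theorem chEmb_range :
    Set.range (chEmb (P := P) (x := x) (y := y)) = {w : V | w ≠ P.leaf x ∧ w ≠ P.leaf y} :=
  Subtype.range_val

theorem ch_small' : ∀ c, c ∉ Set.range (chEmb (P := P) (x := x) (y := y)) →
    ∀ d e, P.G.Adj c d → P.G.Adj c e → d = e := by
  rw [chEmb_range]; exact ch_small P

/-- Distances in the induced subgraph agree with distances in `P`. -/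
theorem ch_dist (a b : {w : V | w ≠ P.leaf x ∧ w ≠ P.leaf y}) :
    P.G.dist a.val b.val =
      (P.G.induce {w : V | w ≠ P.leaf x ∧ w ≠ P.leaf y}).dist a b :=
  dist_embed (chEmb P) (ch_small' P) (P.conn.preconnected _ _)

theorem ch_reach (a b : {w : V | w ≠ P.leaf x ∧ w ≠ P.leaf y}) :
    (P.G.induce {w : V | w ≠ P.leaf x ∧ w ≠ P.leaf y}).Reachable a b :=
  reach_embed (chEmb P) (ch_small' P) (P.conn.preconnected _ _)

include hx hy in
theorem ch_conn : (P.G.induce {w : V | w ≠ P.leaf x ∧ w ≠ P.leaf y}).Connected := by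
  rw [SimpleGraph.connected_iff]
  exact ⟨fun a b => ch_reach P a b, ⟨⟨v, ch_v_mem P hx hy⟩⟩⟩

include hx hy in
theorem ch_img_ne_v (w : {w : V | w ≠ P.leaf x ∧ w ≠ P.leaf y}) (hw : w.val ≠ v) :
    Subtype.val '' {u : {w : V | w ≠ P.leaf x ∧ w ≠ P.leaf y} |
      (P.G.induce {w : V | w ≠ P.leaf x ∧ w ≠ P.leaf y}).Adj w u} = {u | P.G.Adj w.val u} := by
  ext u
  constructor
  · rintro ⟨u', hu', rfl⟩; exact hu'
  · intro hu
    have h1 : u ≠ P.leaf x := by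
      rintro rfl
      exact hw (ch_uvx P hx w.val hu.symm)
    have h2 : u ≠ P.leaf y := by
      rintro rfl
      exact hw (ch_uvy P hy w.val hu.symm)
    exact ⟨⟨u, h1, h2⟩, hu, rfl⟩

include hx hy in
theorem ch_gdeg_ne_v (w : {w : V | w ≠ P.leaf x ∧ w ≠ P.leaf y}) (hw : w.val ≠ v) :
    gdeg (P.G.induce {w : V | w ≠ P.leaf x ∧ w ≠ P.leaf y}) w = gdeg P.G w.val := by
  unfold gdeg
  rw [← ch_img_ne_v P hx hy w hw, Set.ncard_image_of_injective _ Subtype.val_injective]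

include hxy hx hy in
theorem ch_img_at_v :
    Subtype.val '' {u : {w : V | w ≠ P.leaf x ∧ w ≠ P.leaf y} |
      (P.G.induce {w : V | w ≠ P.leaf x ∧ w ≠ P.leaf y}).Adj ⟨v, ch_v_mem P hx hy⟩ u} =
      {u | P.G.Adj v u} \ {P.leaf x, P.leaf y} := by
  ext u
  constructor
  · rintro ⟨u', hu', rfl⟩
    exact ⟨hu', by
      rintro (h | h)
      · exact u'.2.1 h
      · exact u'.2.2 h⟩
  · rintro ⟨hu, hmem⟩
    have h1 : u ≠ P.leaf x := fun h => hmem (by left; exact h)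
    have h2 : u ≠ P.leaf y := fun h => hmem (by right; exact h)
    exact ⟨⟨u, h1, h2⟩, hu, rfl⟩

include hxy hx hy in
theorem ch_gdeg_at_v :
    gdeg (P.G.induce {w : V | w ≠ P.leaf x ∧ w ≠ P.leaf y}) ⟨v, ch_v_mem P hx hy⟩ = 1 := by
  have h3 : gdeg P.G v = 3 := ch_gdeg_v P hxy hx hy
  have hsub : {P.leaf x, P.leaf y} ⊆ {u | P.G.Adj v u} := by
    rintro u (rfl | rfl)
    · exact hx.symm
    · exact hy.symm
  unfold gdeg at h3 ⊢
  rw [← Set.ncard_image_of_injective _ Subtype.val_injective,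
    ch_img_at_v P hxy hx hy, Set.ncard_diff hsub,
    Set.ncard_pair (ch_lxy P hxy), h3]

end Reduced

section Reduce2

theorem dm_comm {V X : Type} (N : PhyloNet V X) (a b : X) : N.dm a b = N.dm b a :=
  SimpleGraph.dist_comm

theorem dm_self {V X : Type} (N : PhyloNet V X) (a : X) : N.dm a a = 0 :=
  SimpleGraph.dist_self

variable {V X : Type} (P : PhyloNet V X) {x y : X} {v : V}
  (hxy : x ≠ y) (hx : P.G.Adj (P.leaf x) v) (hy : P.G.Adj (P.leaf y) v)

/-- The cherry-reduced network. -/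
noncomputable def chReduce (hne : Nonempty {a : X // a ≠ x ∧ a ≠ y}) :
    PhyloNet ↥{w : V | w ≠ P.leaf x ∧ w ≠ P.leaf y} ({a : X // a ≠ x ∧ a ≠ y} ⊕ Unit) where
  G := P.G.induce {w : V | w ≠ P.leaf x ∧ w ≠ P.leaf y}
  conn := ch_conn P hx hy
  leaf := Sum.elim (fun a => ⟨P.leaf a.1, ch_leaf_mem P a.2.1 a.2.2⟩)
    (fun _ => ⟨v, ch_v_mem P hx hy⟩)
  leafInj := by
    rintro (a | ⟨⟩) (b | ⟨⟩) h
    · have : P.leaf a.1 = P.leaf b.1 := congrArg Subtype.val h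
      exact congrArg Sum.inl (Subtype.ext (P.leafInj this))
    · exact absurd ⟨a.1, congrArg Subtype.val h⟩ (ch_v_not_leaf P hxy hx hy)
    · exact absurd ⟨b.1, (congrArg Subtype.val h).symm⟩ (ch_v_not_leaf P hxy hx hy)
    · rfl
  leafDeg := by
    rintro (a | ⟨⟩)
    · have hne' : P.leaf a.1 ≠ v := fun h => ch_v_not_leaf P hxy hx hy ⟨a.1, h⟩
      rw [show (Sum.elim (fun a => (⟨P.leaf a.1, ch_leaf_mem P a.2.1 a.2.2⟩ :
          {w : V | w ≠ P.leaf x ∧ w ≠ P.leaf y}))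
          (fun _ => ⟨v, ch_v_mem P hx hy⟩) (Sum.inl a)) =
          ⟨P.leaf a.1, ch_leaf_mem P a.2.1 a.2.2⟩ from rfl]
      rw [ch_gdeg_ne_v P hx hy _ hne']
      exact P.leafDeg a.1
    · exact ch_gdeg_at_v P hxy hx hy
  internalDeg := by
    intro w hw
    have hv : w.val ≠ v := by
      intro h
      exact hw ⟨Sum.inr (), Subtype.ext h.symm⟩
    have hnl : w.val ∉ Set.range P.leaf := by
      rintro ⟨a, ha⟩
      have ha1 : a ≠ x := fun h => w.2.1 (by rw [← ha, h])
      have ha2 : a ≠ y := fun h => w.2.2 (by rw [← ha, h])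
      exact hw ⟨Sum.inl ⟨a, ha1, ha2⟩, Subtype.ext ha⟩
    rw [ch_gdeg_ne_v P hx hy _ hv]
    exact P.internalDeg _ hnl
  leafSurj := by
    intro w h1
    by_cases hv : w.val = v
    · exact ⟨Sum.inr (), Subtype.ext hv.symm⟩
    · rw [ch_gdeg_ne_v P hx hy _ hv] at h1
      obtain ⟨a, ha⟩ := P.leafSurj _ h1
      have ha1 : a ≠ x := fun h => w.2.1 (by rw [← ha, h])
      have ha2 : a ≠ y := fun h => w.2.2 (by rw [← ha, h])
      exact ⟨Sum.inl ⟨a, ha1, ha2⟩, Subtype.ext ha⟩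
  twoLeaves := ⟨Sum.inl hne.some, Sum.inr (), by simp⟩

variable (P' : PhyloNet ↥{w : V | w ≠ P.leaf x ∧ w ≠ P.leaf y} ({a : X // a ≠ x ∧ a ≠ y} ⊕ Unit))
  (hG : P'.G = P.G.induce {w : V | w ≠ P.leaf x ∧ w ≠ P.leaf y})
  (hleaf : ∀ a : {a : X // a ≠ x ∧ a ≠ y}, (P'.leaf (Sum.inl a) : V) = P.leaf a.1)
  (hz : (P'.leaf (Sum.inr ()) : V) = v)

include hG hleaf in
theorem red_dm_inl (a b : {a : X // a ≠ x ∧ a ≠ y}) :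
    P'.dm (Sum.inl a) (Sum.inl b) = P.dm a.1 b.1 := by
  unfold PhyloNet.dm
  rw [hG, ← ch_dist P, hleaf a, hleaf b]

include hG hleaf hz hx hy in
theorem red_dm_zx (a : {a : X // a ≠ x ∧ a ≠ y}) :
    P.dm x a.1 = P'.dm (Sum.inr ()) (Sum.inl a) + 1 := by
  have e1 : P'.leaf (Sum.inr ()) = ⟨v, ch_v_mem P hx hy⟩ := Subtype.ext hz
  have e2 : P'.leaf (Sum.inl a) =
      ⟨P.leaf a.1, ch_leaf_mem P a.2.1 a.2.2⟩ := Subtype.ext (hleaf a)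
  unfold PhyloNet.dm
  rw [e1, e2, hG, ← ch_dist P]
  exact dist_pendant hx (ch_uvx P hx)
    (fun h => a.2.1 (P.leafInj h).symm) (P.conn.preconnected _ _)

include hG hleaf hz hx hy in
theorem red_dm_zy (a : {a : X // a ≠ x ∧ a ≠ y}) :
    P.dm y a.1 = P'.dm (Sum.inr ()) (Sum.inl a) + 1 := by
  have e1 : P'.leaf (Sum.inr ()) = ⟨v, ch_v_mem P hx hy⟩ := Subtype.ext hz
  have e2 : P'.leaf (Sum.inl a) =
      ⟨P.leaf a.1, ch_leaf_mem P a.2.1 a.2.2⟩ := Subtype.ext (hleaf a)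
  unfold PhyloNet.dm
  rw [e1, e2, hG, ← ch_dist P]
  exact dist_pendant hy (ch_uvy P hy)
    (fun h => a.2.2 (P.leafInj h).symm) (P.conn.preconnected _ _)

end Reduce2

section Grow

variable {W' X : Type} {x y : X}
  (Q : PhyloNet W' ({a : X // a ≠ x ∧ a ≠ y} ⊕ Unit))

/-- The graph obtained by attaching a cherry at the leaf `z` of `Q`. -/
def growG : SimpleGraph (W' ⊕ Bool) where
  Adj p q := match p, q with
    | .inl a, .inl b => Q.G.Adj a b
    | .inl a, .inr _ => a = Q.leaf (Sum.inr ())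
    | .inr _, .inl b => b = Q.leaf (Sum.inr ())
    | .inr _, .inr _ => False
  symm := by constructor; rintro (a | i) (b | j) h
             · exact h.symm
             · exact h
             · exact h
             · exact h.elim
  loopless := by constructor; rintro (a | i) h
                 · exact Q.G.loopless.irrefl a h
                 · exact h

theorem growG_adj_inl_inl {a b : W'} : (growG Q).Adj (Sum.inl a) (Sum.inl b) ↔ Q.G.Adj a b :=
  Iff.rfl

theorem growG_adj_inl_inr {a : W'} {j : Bool} :
    (growG Q).Adj (Sum.inl a) (Sum.inr j) ↔ a = Q.leaf (Sum.inr ()) := Iff.rfl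

theorem growG_adj_inr_inl {b : W'} {i : Bool} :
    (growG Q).Adj (Sum.inr i) (Sum.inl b) ↔ b = Q.leaf (Sum.inr ()) := Iff.rfl

theorem growG_adj_inr_inr {i j : Bool} : ¬ (growG Q).Adj (Sum.inr i) (Sum.inr j) :=
  fun h => h

/-- Embedding of `Q` into the grown graph. -/
def growEmb : Q.G ↪g growG Q where
  toFun := Sum.inl
  inj' := Sum.inl_injective
  map_rel_iff' := Iff.rfl

theorem grow_small : ∀ c, c ∉ Set.range (growEmb Q) →
    ∀ d e, (growG Q).Adj c d → (growG Q).Adj c e → d = e := by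
  rintro (a | i) hc d e hd he
  · exact absurd ⟨a, rfl⟩ hc
  · rcases d with b | j
    · rcases e with b' | j'
      · rw [growG_adj_inr_inl] at hd he; rw [hd, he]
      · exact (growG_adj_inr_inr Q he).elim
    · exact (growG_adj_inr_inr Q hd).elim

theorem grow_conn : (growG Q).Connected := by
  rw [SimpleGraph.connected_iff]
  have key : ∀ p, (growG Q).Reachable p (Sum.inl (Q.leaf (Sum.inr ()))) := by
    rintro (a | i)
    · exact (Q.conn.preconnected a (Q.leaf (Sum.inr ()))).map (growEmb Q).toHom
    · exact SimpleGraph.Adj.reachable (by rw [growG_adj_inr_inl])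
  exact ⟨fun p q => (key p).trans (key q).symm, ⟨Sum.inl (Q.leaf (Sum.inr ()))⟩⟩

theorem grow_nbr_inr (i : Bool) :
    {p | (growG Q).Adj (Sum.inr i) p} = {Sum.inl (Q.leaf (Sum.inr ()))} := by
  ext p
  rcases p with b | j
  · simp only [Set.mem_setOf_eq, Set.mem_singleton_iff, growG_adj_inr_inl]
    exact ⟨fun h => by rw [h], fun h => Sum.inl_injective h⟩
  · simp only [Set.mem_setOf_eq, Set.mem_singleton_iff]
    exact ⟨fun h => (growG_adj_inr_inr Q h).elim, fun h => by simp at h⟩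

theorem grow_gdeg_inr (i : Bool) : gdeg (growG Q) (Sum.inr i) = 1 := by
  unfold gdeg
  rw [grow_nbr_inr Q i, Set.ncard_singleton]

theorem grow_nbr_inl_ne {a : W'} (ha : a ≠ Q.leaf (Sum.inr ())) :
    {p | (growG Q).Adj (Sum.inl a) p} = Sum.inl '' {b | Q.G.Adj a b} := by
  ext p
  rcases p with b | j
  · simp only [Set.mem_setOf_eq, growG_adj_inl_inl]
    constructor
    · intro h; exact ⟨b, h, rfl⟩
    · rintro ⟨b', hb', hb⟩; rwa [← Sum.inl_injective hb]
  · simp only [Set.mem_setOf_eq, growG_adj_inl_inr]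
    constructor
    · intro h; exact absurd h ha
    · rintro ⟨b', _, hb⟩; simp at hb

theorem grow_gdeg_inl_ne {a : W'} (ha : a ≠ Q.leaf (Sum.inr ())) :
    gdeg (growG Q) (Sum.inl a) = gdeg Q.G a := by
  unfold gdeg
  rw [grow_nbr_inl_ne Q ha, Set.ncard_image_of_injective _ Sum.inl_injective]

theorem grow_gdeg_u0 : gdeg (growG Q) (Sum.inl (Q.leaf (Sum.inr ()))) = 3 := by
  obtain ⟨c₀, hc₀⟩ := Set.ncard_eq_one.mp (Q.leafDeg (Sum.inr ()))
  have hset : {p | (growG Q).Adj (Sum.inl (Q.leaf (Sum.inr ()))) p} =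
      {Sum.inl c₀, Sum.inr true, Sum.inr false} := by
    ext p
    rcases p with b | j
    · simp only [Set.mem_setOf_eq, growG_adj_inl_inl, Set.mem_insert_iff,
        Set.mem_singleton_iff]
      constructor
      · intro h
        left
        have : b ∈ {u | Q.G.Adj (Q.leaf (Sum.inr ())) u} := h
        rw [hc₀] at this
        rw [this]
      · rintro (h | h | h)
        · have : b ∈ ({c₀} : Set W') := by rw [Sum.inl_injective h]; rfl
          rw [← hc₀] at this
          exact this
        · simp at h
        · simp at h
    · simp only [Set.mem_setOf_eq, growG_adj_inl_inr, Set.mem_insert_iff,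
        Set.mem_singleton_iff]
      constructor
      · intro _
        rcases j with _ | _ <;> simp
      · intro _; trivial
  unfold gdeg
  rw [hset]
  rw [Set.ncard_eq_three]
  exact ⟨_, _, _, by simp, by simp, by simp, rfl⟩

end Grow

section Grow2

variable {W' X : Type} {x y : X}
  (Q : PhyloNet W' ({a : X // a ≠ x ∧ a ≠ y} ⊕ Unit))

open Classical in
/-- The leaf labelling of the grown network. -/
noncomputable def growLeaf (a : X) : W' ⊕ Bool :=
  if h1 : a = x then Sum.inr true
  else if h2 : a = y then Sum.inr false
  else Sum.inl (Q.leaf (Sum.inl ⟨a, h1, h2⟩))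

theorem growLeaf_x : growLeaf (x := x) (y := y) Q x = Sum.inr true := by
  unfold growLeaf; rw [dif_pos rfl]

theorem growLeaf_y (hxy : x ≠ y) : growLeaf (x := x) (y := y) Q y = Sum.inr false := by
  unfold growLeaf; rw [dif_neg (Ne.symm hxy), dif_pos rfl]

theorem growLeaf_other {a : X} (h1 : a ≠ x) (h2 : a ≠ y) :
    growLeaf (x := x) (y := y) Q a = Sum.inl (Q.leaf (Sum.inl ⟨a, h1, h2⟩)) := by
  unfold growLeaf; rw [dif_neg h1, dif_neg h2]

variable (hxy : x ≠ y)

include hxy in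
theorem growLeaf_inj : Function.Injective (growLeaf (x := x) (y := y) Q) := by
  intro a b h
  by_cases h1 : a = x <;> by_cases h2 : a = y <;> by_cases h3 : b = x <;> by_cases h4 : b = y
  all_goals try (exact h1.trans h3.symm)
  all_goals try (exact h2.trans h4.symm)
  all_goals try (exact absurd (h1.symm.trans h2) hxy)
  all_goals try (exact absurd (h3.symm.trans h4) hxy)
  · exfalso; rw [h1, h4, growLeaf_x, growLeaf_y Q hxy] at h; simp at h
  · exfalso; rw [h1, growLeaf_x, growLeaf_other Q h3 h4] at h; simp at h
  · exfalso; rw [h2, h3, growLeaf_y Q hxy, growLeaf_x] at h; simp at h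
  · exfalso; rw [h2, growLeaf_y Q hxy, growLeaf_other Q h3 h4] at h; simp at h
  · exfalso; rw [h3, growLeaf_other Q h1 h2, growLeaf_x] at h; simp at h
  · exfalso; rw [h4, growLeaf_other Q h1 h2, growLeaf_y Q hxy] at h; simp at h
  · rw [growLeaf_other Q h1 h2, growLeaf_other Q h3 h4] at h
    have := Q.leafInj (Sum.inl_injective h)
    exact congrArg Subtype.val (Sum.inl_injective this)

theorem grow_leaf_ne_u0 {a : X} (h1 : a ≠ x) (h2 : a ≠ y) :
    Q.leaf (Sum.inl ⟨a, h1, h2⟩) ≠ Q.leaf (Sum.inr ()) := by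
  intro h
  exact absurd (Q.leafInj h) (by simp)

/-- The grown network. -/
noncomputable def grow (hX : Nontrivial X) : PhyloNet (W' ⊕ Bool) X where
  G := growG Q
  conn := grow_conn Q
  leaf := growLeaf Q
  leafInj := growLeaf_inj Q hxy
  leafDeg := by
    intro a
    by_cases h1 : a = x
    · subst h1; rw [growLeaf_x]; exact grow_gdeg_inr Q true
    by_cases h2 : a = y
    · subst h2; rw [growLeaf_y Q hxy]; exact grow_gdeg_inr Q false
    rw [growLeaf_other Q h1 h2, grow_gdeg_inl_ne Q (grow_leaf_ne_u0 Q h1 h2)]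
    exact Q.leafDeg _
  internalDeg := by
    rintro (a | i) hp
    · by_cases ha : a = Q.leaf (Sum.inr ())
      · subst ha; exact grow_gdeg_u0 Q
      · rw [grow_gdeg_inl_ne Q ha]
        apply Q.internalDeg
        rintro ⟨l, hl⟩
        rcases l with b | ⟨⟩
        · refine hp ⟨b.1, ?_⟩
          rw [growLeaf_other Q b.2.1 b.2.2, ← hl]
        · exact ha hl.symm
    · rcases i with _ | _
      · exact absurd ⟨y, by rw [growLeaf_y Q hxy]⟩ hp
      · exact absurd ⟨x, by rw [growLeaf_x]⟩ hp
  leafSurj := by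
    rintro (a | i) h1
    · by_cases ha : a = Q.leaf (Sum.inr ())
      · rw [ha, grow_gdeg_u0 Q] at h1
        · omega
      · rw [grow_gdeg_inl_ne Q ha] at h1
        obtain ⟨l, hl⟩ := Q.leafSurj _ h1
        rcases l with b | ⟨⟩
        · exact ⟨b.1, by rw [growLeaf_other Q b.2.1 b.2.2, hl]⟩
        · exact absurd hl.symm ha
    · rcases i with _ | _
      · exact ⟨y, by rw [growLeaf_y Q hxy]⟩
      · exact ⟨x, by rw [growLeaf_x]⟩
  twoLeaves := hX

variable (hX : Nontrivial X)

theorem grow_dist_inl (a b : W') :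
    (growG Q).dist (Sum.inl a) (Sum.inl b) = Q.G.dist a b :=
  dist_embed (growEmb Q) (grow_small Q) ((grow_conn Q).preconnected _ _)

theorem grow_dm_other {a b : X} (h1 : a ≠ x) (h2 : a ≠ y) (h3 : b ≠ x) (h4 : b ≠ y) :
    (grow Q hxy hX).dm a b = Q.dm (Sum.inl ⟨a, h1, h2⟩) (Sum.inl ⟨b, h3, h4⟩) := by
  unfold PhyloNet.dm
  show (growG Q).dist (growLeaf Q a) (growLeaf Q b) = _
  rw [growLeaf_other Q h1 h2, growLeaf_other Q h3 h4]
  exact grow_dist_inl Q _ _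

theorem grow_dm_x {a : X} (h1 : a ≠ x) (h2 : a ≠ y) :
    (grow Q hxy hX).dm x a = Q.dm (Sum.inr ()) (Sum.inl ⟨a, h1, h2⟩) + 1 := by
  unfold PhyloNet.dm
  show (growG Q).dist (growLeaf Q x) (growLeaf Q a) = _
  rw [growLeaf_other Q h1 h2, growLeaf_x]
  rw [dist_pendant (v := Sum.inl (Q.leaf (Sum.inr ())))
    (by rw [growG_adj_inr_inl])
    (fun d hd => by
      rcases d with b | j
      · rw [growG_adj_inr_inl] at hd; rw [hd]
      · exact (growG_adj_inr_inr Q hd).elim)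
    (by simp)
    ((grow_conn Q).preconnected _ _)]
  rw [grow_dist_inl Q]

theorem grow_dm_y {a : X} (h1 : a ≠ x) (h2 : a ≠ y) :
    (grow Q hxy hX).dm y a = Q.dm (Sum.inr ()) (Sum.inl ⟨a, h1, h2⟩) + 1 := by
  unfold PhyloNet.dm
  show (growG Q).dist (growLeaf Q y) (growLeaf Q a) = _
  rw [growLeaf_other Q h1 h2, growLeaf_y Q hxy]
  rw [dist_pendant (v := Sum.inl (Q.leaf (Sum.inr ())))
    (by rw [growG_adj_inr_inl])
    (fun d hd => by
      rcases d with b | j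
      · rw [growG_adj_inr_inl] at hd; rw [hd]
      · exact (growG_adj_inr_inr Q hd).elim)
    (by simp)
    ((grow_conn Q).preconnected _ _)]
  rw [grow_dist_inl Q]

theorem grow_dm_xy : (grow Q hxy hX).dm x y = 2 := by
  unfold PhyloNet.dm
  show (growG Q).dist (growLeaf Q x) (growLeaf Q y) = 2
  rw [growLeaf_x, growLeaf_y Q hxy]
  exact dist_two (by simp) (growG_adj_inr_inr Q)
    (by rw [growG_adj_inr_inl]) (by
      show (growG Q).Adj (Sum.inl _) (Sum.inr false)
      rw [growG_adj_inl_inr])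

end Grow2

section Ext

variable {V V₂ : Type}

open Classical in
/-- Extension of a map on the cherry-reduced vertex sets to the full vertex sets. -/
noncomputable def extFun (lx ly : V) (lx' ly' : V₂)
    (ψ : {w : V | w ≠ lx ∧ w ≠ ly} → {w : V₂ | w ≠ lx' ∧ w ≠ ly'}) (u : V) : V₂ :=
  if h1 : u = lx then lx'
  else if h2 : u = ly then ly'
  else (ψ ⟨u, h1, h2⟩).val

variable {lx ly : V} {lx' ly' : V₂}
  {ψ : {w : V | w ≠ lx ∧ w ≠ ly} → {w : V₂ | w ≠ lx' ∧ w ≠ ly'}}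

theorem extFun_x : extFun lx ly lx' ly' ψ lx = lx' := by unfold extFun; rw [dif_pos rfl]

theorem extFun_y (h : ly ≠ lx) : extFun lx ly lx' ly' ψ ly = ly' := by
  unfold extFun; rw [dif_neg h, dif_pos rfl]

theorem extFun_other {u : V} (h1 : u ≠ lx) (h2 : u ≠ ly) :
    extFun lx ly lx' ly' ψ u = (ψ ⟨u, h1, h2⟩).val := by
  unfold extFun; rw [dif_neg h1, dif_neg h2]

theorem extFun_leftInv
    {ψ' : {w : V₂ | w ≠ lx' ∧ w ≠ ly'} → {w : V | w ≠ lx ∧ w ≠ ly}}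
    (hinv : ∀ q, ψ' (ψ q) = q) (hP : ly ≠ lx) (hR : ly' ≠ lx') (u : V) :
    extFun lx' ly' lx ly ψ' (extFun lx ly lx' ly' ψ u) = u := by
  by_cases h1 : u = lx
  · rw [h1, extFun_x, extFun_x]
  by_cases h2 : u = ly
  · rw [h2, extFun_y hP, extFun_y hR]
  rw [extFun_other h1 h2,
    extFun_other (ψ ⟨u, h1, h2⟩).2.1 (ψ ⟨u, h1, h2⟩).2.2]
  have he : (⟨(ψ ⟨u, h1, h2⟩).val, (ψ ⟨u, h1, h2⟩).2.1, (ψ ⟨u, h1, h2⟩).2.2⟩ :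
      {w : V₂ | w ≠ lx' ∧ w ≠ ly'}) = ψ ⟨u, h1, h2⟩ := Subtype.ext rfl
  rw [he, hinv]

end Ext

section ChAdj

variable {V X : Type} (P : PhyloNet V X) {x y : X} {v : V}
  (hx : P.G.Adj (P.leaf x) v) (hy : P.G.Adj (P.leaf y) v)

include hx in
theorem ch_adj_x_iff (d : V) : P.G.Adj (P.leaf x) d ↔ d = v :=
  ⟨ch_uvx P hx d, fun h => h ▸ hx⟩

include hy in
theorem ch_adj_y_iff (d : V) : P.G.Adj (P.leaf y) d ↔ d = v :=
  ⟨ch_uvy P hy d, fun h => h ▸ hy⟩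

end ChAdj

section ExtIsom

variable {V V₂ X : Type} (P : PhyloNet V X) (R : PhyloNet V₂ X) {x y : X} {v : V} {w0 : V₂}
  (hxy : x ≠ y)
  (hx : P.G.Adj (P.leaf x) v) (hy : P.G.Adj (P.leaf y) v)
  (hx0 : R.G.Adj (R.leaf x) w0) (hy0 : R.G.Adj (R.leaf y) w0)
  (P' : PhyloNet ↥{w : V | w ≠ P.leaf x ∧ w ≠ P.leaf y} ({a : X // a ≠ x ∧ a ≠ y} ⊕ Unit))
  (hGP : P'.G = P.G.induce {w : V | w ≠ P.leaf x ∧ w ≠ P.leaf y})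
  (hleafP : ∀ a : {a : X // a ≠ x ∧ a ≠ y}, (P'.leaf (Sum.inl a) : V) = P.leaf a.1)
  (hzP : (P'.leaf (Sum.inr ()) : V) = v)
  (R' : PhyloNet ↥{w : V₂ | w ≠ R.leaf x ∧ w ≠ R.leaf y} ({a : X // a ≠ x ∧ a ≠ y} ⊕ Unit))
  (hGR : R'.G = R.G.induce {w : V₂ | w ≠ R.leaf x ∧ w ≠ R.leaf y})
  (hleafR : ∀ a : {a : X // a ≠ x ∧ a ≠ y}, (R'.leaf (Sum.inl a) : V₂) = R.leaf a.1)
  (hzR : (R'.leaf (Sum.inr ()) : V₂) = w0)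
  (φ' : P'.G ≃g R'.G) (hφ : ∀ l, φ' (P'.leaf l) = R'.leaf l)

include hxy hx hy hx0 hy0 hGP hleafP hzP hGR hleafR hzR hφ in
theorem ext_isom : P.Isom R := by
  classical
  set ψ : {w : V | w ≠ P.leaf x ∧ w ≠ P.leaf y} → {w : V₂ | w ≠ R.leaf x ∧ w ≠ R.leaf y} :=
    fun q => φ' q with hψ
  set ψ' : {w : V₂ | w ≠ R.leaf x ∧ w ≠ R.leaf y} → {w : V | w ≠ P.leaf x ∧ w ≠ P.leaf y} :=
    fun q => φ'.symm q with hψ'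
  have hinv : ∀ q, ψ' (ψ q) = q := fun q => φ'.symm_apply_apply q
  have hinv' : ∀ q, ψ (ψ' q) = q := fun q => φ'.apply_symm_apply q
  have hPyx : P.leaf y ≠ P.leaf x := (ch_lxy P hxy).symm
  have hRyx : R.leaf y ≠ R.leaf x := (ch_lxy R hxy).symm
  have hψv : ψ ⟨v, ch_v_mem P hx hy⟩ = ⟨w0, ch_v_mem R hx0 hy0⟩ := by
    have h1 : P'.leaf (Sum.inr ()) = ⟨v, ch_v_mem P hx hy⟩ := Subtype.ext hzP
    have h2 : R'.leaf (Sum.inr ()) = ⟨w0, ch_v_mem R hx0 hy0⟩ := Subtype.ext hzR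
    rw [hψ, ← h1, ← h2]
    exact hφ (Sum.inr ())
  have hAR : ∀ (G1 : SimpleGraph {w : V₂ | w ≠ R.leaf x ∧ w ≠ R.leaf y})
      (_ : G1 = R.G.induce {w : V₂ | w ≠ R.leaf x ∧ w ≠ R.leaf y}) (a b),
      G1.Adj a b ↔ R.G.Adj a.val b.val := by
    rintro G1 rfl a b; exact Iff.rfl
  have hAP : ∀ (G1 : SimpleGraph {w : V | w ≠ P.leaf x ∧ w ≠ P.leaf y})
      (_ : G1 = P.G.induce {w : V | w ≠ P.leaf x ∧ w ≠ P.leaf y}) (a b),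
      G1.Adj a b ↔ P.G.Adj a.val b.val := by
    rintro G1 rfl a b; exact Iff.rfl
  have hψadj : ∀ q1 q2, R.G.Adj (ψ q1).val (ψ q2).val ↔ P.G.Adj q1.val q2.val := by
    intro q1 q2
    have h1 : R'.G.Adj (φ' q1) (φ' q2) ↔ P'.G.Adj q1 q2 := φ'.map_adj_iff
    exact ((hAR R'.G hGR (φ' q1) (φ' q2)).symm.trans h1).trans (hAP P'.G hGP q1 q2)
  have hψinj : Function.Injective ψ := fun a b h => by
    have := φ'.injective h
    exact this
  -- the extended equivalence
  refine ⟨⟨⟨extFun (P.leaf x) (P.leaf y) (R.leaf x) (R.leaf y) ψ,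
    extFun (R.leaf x) (R.leaf y) (P.leaf x) (P.leaf y) ψ',
    extFun_leftInv hinv hPyx hRyx,
    extFun_leftInv hinv' hRyx hPyx⟩, ?_⟩, ?_⟩
  · -- map_rel_iff
    intro a b
    show R.G.Adj (extFun _ _ _ _ ψ a) (extFun _ _ _ _ ψ b) ↔ P.G.Adj a b
    by_cases h1 : a = P.leaf x
    · subst h1
      rw [extFun_x]
      by_cases h3 : b = P.leaf x
      · subst h3; rw [extFun_x]
        exact iff_of_false (R.G.loopless.irrefl _) (P.G.loopless.irrefl _)
      by_cases h4 : b = P.leaf y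
      · subst h4; rw [extFun_y hPyx]
        exact iff_of_false (ch_nadjxy R hx0 hy0) (ch_nadjxy P hx hy)
      · rw [extFun_other h3 h4, ch_adj_x_iff R hx0, ch_adj_x_iff P hx]
        constructor
        · intro h
          have : ψ ⟨b, h3, h4⟩ = ⟨w0, ch_v_mem R hx0 hy0⟩ := Subtype.ext h
          rw [← hψv] at this
          have := hψinj this
          exact congrArg Subtype.val this
        · intro h
          have : (⟨b, h3, h4⟩ : {w : V | w ≠ P.leaf x ∧ w ≠ P.leaf y}) =
              ⟨v, ch_v_mem P hx hy⟩ := Subtype.ext h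
          rw [this, hψv]
    by_cases h2 : a = P.leaf y
    · subst h2
      rw [extFun_y hPyx]
      by_cases h3 : b = P.leaf x
      · subst h3; rw [extFun_x]
        exact iff_of_false (fun h => ch_nadjxy R hx0 hy0 h.symm)
          (fun h => ch_nadjxy P hx hy h.symm)
      by_cases h4 : b = P.leaf y
      · subst h4; rw [extFun_y hPyx]
        exact iff_of_false (R.G.loopless.irrefl _) (P.G.loopless.irrefl _)
      · rw [extFun_other h3 h4, ch_adj_y_iff R hy0, ch_adj_y_iff P hy]
        constructor
        · intro h
          have : ψ ⟨b, h3, h4⟩ = ⟨w0, ch_v_mem R hx0 hy0⟩ := Subtype.ext h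
          rw [← hψv] at this
          exact congrArg Subtype.val (hψinj this)
        · intro h
          have : (⟨b, h3, h4⟩ : {w : V | w ≠ P.leaf x ∧ w ≠ P.leaf y}) =
              ⟨v, ch_v_mem P hx hy⟩ := Subtype.ext h
          rw [this, hψv]
    rw [extFun_other h1 h2]
    by_cases h3 : b = P.leaf x
    · subst h3; rw [extFun_x]
      rw [R.G.adj_comm, P.G.adj_comm, ch_adj_x_iff R hx0, ch_adj_x_iff P hx]
      constructor
      · intro h
        have : ψ ⟨a, h1, h2⟩ = ⟨w0, ch_v_mem R hx0 hy0⟩ := Subtype.ext h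
        rw [← hψv] at this
        exact congrArg Subtype.val (hψinj this)
      · intro h
        have : (⟨a, h1, h2⟩ : {w : V | w ≠ P.leaf x ∧ w ≠ P.leaf y}) =
            ⟨v, ch_v_mem P hx hy⟩ := Subtype.ext h
        rw [this, hψv]
    by_cases h4 : b = P.leaf y
    · subst h4; rw [extFun_y hPyx]
      rw [R.G.adj_comm, P.G.adj_comm, ch_adj_y_iff R hy0, ch_adj_y_iff P hy]
      constructor
      · intro h
        have : ψ ⟨a, h1, h2⟩ = ⟨w0, ch_v_mem R hx0 hy0⟩ := Subtype.ext h
        rw [← hψv] at this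
        exact congrArg Subtype.val (hψinj this)
      · intro h
        have : (⟨a, h1, h2⟩ : {w : V | w ≠ P.leaf x ∧ w ≠ P.leaf y}) =
            ⟨v, ch_v_mem P hx hy⟩ := Subtype.ext h
        rw [this, hψv]
    rw [extFun_other h3 h4]
    exact hψadj ⟨a, h1, h2⟩ ⟨b, h3, h4⟩
  · -- leaves
    intro l
    show extFun _ _ _ _ ψ (P.leaf l) = R.leaf l
    by_cases h1 : l = x
    · subst h1; rw [extFun_x]
    by_cases h2 : l = y
    · subst h2; rw [extFun_y hPyx]
    have hm1 : P.leaf l ≠ P.leaf x := fun h => h1 (P.leafInj h)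
    have hm2 : P.leaf l ≠ P.leaf y := fun h => h2 (P.leafInj h)
    rw [extFun_other hm1 hm2]
    have e1 : P'.leaf (Sum.inl ⟨l, h1, h2⟩) =
        ⟨P.leaf l, hm1, hm2⟩ := Subtype.ext (hleafP ⟨l, h1, h2⟩)
    rw [hψ, ← e1]
    show (φ' (P'.leaf (Sum.inl ⟨l, h1, h2⟩)) : V₂) = R.leaf l
    rw [hφ (Sum.inl ⟨l, h1, h2⟩)]
    exact hleafR ⟨l, h1, h2⟩

end ExtIsom

section ResIsom

variable {V W' X : Type} (N : PhyloNet V X) {x y : X} {v : V}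
  (hxy : x ≠ y)
  (hx : N.G.Adj (N.leaf x) v) (hy : N.G.Adj (N.leaf y) v)
  (N' : PhyloNet ↥{w : V | w ≠ N.leaf x ∧ w ≠ N.leaf y} ({a : X // a ≠ x ∧ a ≠ y} ⊕ Unit))
  (hG : N'.G = N.G.induce {w : V | w ≠ N.leaf x ∧ w ≠ N.leaf y})
  (hleaf : ∀ a : {a : X // a ≠ x ∧ a ≠ y}, (N'.leaf (Sum.inl a) : V) = N.leaf a.1)
  (hz : (N'.leaf (Sum.inr ()) : V) = v)
  (Q : PhyloNet W' ({a : X // a ≠ x ∧ a ≠ y} ⊕ Unit)) (hX : Nontrivial X)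
  (φ : N.G ≃g (grow Q hxy hX).G)
  (hφl : ∀ l : X, φ (N.leaf l) = (grow Q hxy hX).leaf l)

include hx hy hG hleaf hz hφl in
theorem res_isom : N'.Isom Q := by
  have hφx : φ (N.leaf x) = Sum.inr true := (hφl x).trans (growLeaf_x Q)
  have hφy : φ (N.leaf y) = Sum.inr false := (hφl y).trans (growLeaf_y Q hxy)
  have him : ∀ q : {w : V | w ≠ N.leaf x ∧ w ≠ N.leaf y}, ∃ w : W', φ q.val = Sum.inl w := by
    intro q
    rcases hc : φ q.val with w | i
    · exact ⟨w, rfl⟩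
    · exfalso
      rcases i with _ | _
      · exact q.2.2 (φ.injective (hc.trans hφy.symm))
      · exact q.2.1 (φ.injective (hc.trans hφx.symm))
  set ψ : {w : V | w ≠ N.leaf x ∧ w ≠ N.leaf y} → W' := fun q => (him q).choose with hψdef
  have hspec : ∀ q, φ q.val = Sum.inl (ψ q) := fun q => (him q).choose_spec
  have hinj : Function.Injective ψ := by
    intro q1 q2 h
    have : φ q1.val = φ q2.val := by rw [hspec q1, hspec q2, h]
    exact Subtype.ext (φ.injective this)
  have hsurj : Function.Surjective ψ := by
    intro w
    have h0 : φ (φ.symm (Sum.inl w)) = Sum.inl w := φ.apply_symm_apply _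
    have h1 : φ.symm (Sum.inl w) ≠ N.leaf x := by
      intro h; rw [h, hφx] at h0; simp at h0
    have h2 : φ.symm (Sum.inl w) ≠ N.leaf y := by
      intro h; rw [h, hφy] at h0; simp at h0
    refine ⟨⟨φ.symm (Sum.inl w), h1, h2⟩, ?_⟩
    have := hspec ⟨φ.symm (Sum.inl w), h1, h2⟩
    rw [h0] at this
    exact (Sum.inl_injective this).symm
  have hAN : ∀ (G1 : SimpleGraph {w : V | w ≠ N.leaf x ∧ w ≠ N.leaf y})
      (_ : G1 = N.G.induce {w : V | w ≠ N.leaf x ∧ w ≠ N.leaf y}) (a b),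
      G1.Adj a b ↔ N.G.Adj a.val b.val := by
    rintro G1 rfl a b; exact Iff.rfl
  refine ⟨⟨Equiv.ofBijective ψ ⟨hinj, hsurj⟩, ?_⟩, ?_⟩
  · intro q1 q2
    show Q.G.Adj (ψ q1) (ψ q2) ↔ N'.G.Adj q1 q2
    rw [← growG_adj_inl_inl Q, ← hspec q1, ← hspec q2]
    have h1 : (growG Q).Adj (φ q1.val) (φ q2.val) ↔ N.G.Adj q1.val q2.val := φ.map_adj_iff
    rw [h1, hAN N'.G hG q1 q2]
  · rintro (a | u)
    · show ψ (N'.leaf (Sum.inl a)) = Q.leaf (Sum.inl a)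
      apply Sum.inl_injective
      rw [← hspec (N'.leaf (Sum.inl a))]
      have e1 : (N'.leaf (Sum.inl a) : V) = N.leaf a.1 := hleaf a
      rw [e1, hφl a.1]
      show growLeaf Q a.1 = Sum.inl (Q.leaf (Sum.inl a))
      rw [growLeaf_other Q a.2.1 a.2.2]
    · show ψ (N'.leaf (Sum.inr u)) = Q.leaf (Sum.inr u)
      apply Sum.inl_injective
      rw [← hspec (N'.leaf (Sum.inr u))]
      have e1 : (N'.leaf (Sum.inr u) : V) = v := hz
      rw [e1]
      have hadj : (growG Q).Adj (φ (N.leaf x)) (φ v) := φ.map_adj_iff.mpr hx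
      rw [hφx] at hadj
      rcases hc : φ v with b | j
      · rw [hc] at hadj
        rw [growG_adj_inr_inl] at hadj
        rw [hadj]
      · rw [hc] at hadj
        exact (growG_adj_inr_inr Q hadj).elim

end ResIsom

/-- a network with a cherry is reconstructible from its shortest
distance matrix iff the network obtained by reducing the cherry is. -/
theorem cherry_reduction_reconstructible {V X : Type} (N : PhyloNet V X)
    (x y : X) (v : V) (hxy : x ≠ y)
    (hx : N.G.Adj (N.leaf x) v) (hy : N.G.Adj (N.leaf y) v)
    (N' : PhyloNet (↥{w : V | w ≠ N.leaf x ∧ w ≠ N.leaf y})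
      ({a : X // a ≠ x ∧ a ≠ y} ⊕ Unit))
    (hG : N'.G = N.G.induce {w : V | w ≠ N.leaf x ∧ w ≠ N.leaf y})
    (hleaf : ∀ a : {a : X // a ≠ x ∧ a ≠ y},
      (N'.leaf (Sum.inl a) : V) = N.leaf a.1)
    (hz : (N'.leaf (Sum.inr ()) : V) = v) :
    N.Reconstructible ↔ N'.Reconstructible := by
  have hne : Nonempty {a : X // a ≠ x ∧ a ≠ y} := by
    obtain ⟨p, q, hpq⟩ := N'.twoLeaves
    rcases p with a | ⟨⟩
    · exact ⟨a⟩
    rcases q with b | ⟨⟩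
    · exact ⟨b⟩
    · exact absurd rfl hpq
  constructor
  · -- N reconstructible → N' reconstructible
    intro hN W' Q hSD'
    have hX : Nontrivial X := N.twoLeaves
    have hSD : N.SameDist (grow Q hxy hX) := by
      intro a b
      by_cases h1 : a = x
      · rw [h1]
        by_cases h3 : b = x
        · rw [h3, dm_self, dm_self]
        by_cases h4 : b = y
        · rw [h4, ch_dmxy N hxy hx hy, grow_dm_xy Q hxy hX]
        · rw [red_dm_zx N hx hy N' hG hleaf hz ⟨b, h3, h4⟩,
            grow_dm_x Q hxy hX h3 h4, hSD' (Sum.inr ()) (Sum.inl ⟨b, h3, h4⟩)]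
      by_cases h2 : a = y
      · rw [h2]
        by_cases h3 : b = x
        · rw [h3, dm_comm, dm_comm (grow Q hxy hX),
            ch_dmxy N hxy hx hy, grow_dm_xy Q hxy hX]
        by_cases h4 : b = y
        · rw [h4, dm_self, dm_self]
        · rw [red_dm_zy N hx hy N' hG hleaf hz ⟨b, h3, h4⟩,
            grow_dm_y Q hxy hX h3 h4, hSD' (Sum.inr ()) (Sum.inl ⟨b, h3, h4⟩)]
      by_cases h3 : b = x
      · rw [h3, dm_comm, dm_comm (grow Q hxy hX),
          red_dm_zx N hx hy N' hG hleaf hz ⟨a, h1, h2⟩,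
          grow_dm_x Q hxy hX h1 h2, hSD' (Sum.inr ()) (Sum.inl ⟨a, h1, h2⟩)]
      by_cases h4 : b = y
      · rw [h4, dm_comm, dm_comm (grow Q hxy hX),
          red_dm_zy N hx hy N' hG hleaf hz ⟨a, h1, h2⟩,
          grow_dm_y Q hxy hX h1 h2, hSD' (Sum.inr ()) (Sum.inl ⟨a, h1, h2⟩)]
      · rw [red_dm_inl N N' hG hleaf ⟨a, h1, h2⟩ ⟨b, h3, h4⟩ |>.symm,
          grow_dm_other Q hxy hX h1 h2 h3 h4,
          hSD' (Sum.inl ⟨a, h1, h2⟩) (Sum.inl ⟨b, h3, h4⟩)]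
    obtain ⟨φ, hφl⟩ := hN _ (grow Q hxy hX) hSD
    exact res_isom N hxy hx hy N' hG hleaf hz Q hX φ hφl
  · -- N' reconstructible → N reconstructible
    intro hN' W M hSD
    -- M has the cherry {x, y} with some common neighbour w0
    have hM2 : M.dm x y = 2 := by rw [← hSD x y]; exact ch_dmxy N hxy hx hy
    obtain ⟨w0, hMx, hMy⟩ : ∃ w0, M.G.Adj (M.leaf x) w0 ∧ M.G.Adj (M.leaf y) w0 := by
      obtain ⟨p, hp, hl⟩ :=
        SimpleGraph.Reachable.exists_path_of_dist (M.conn.preconnected (M.leaf x) (M.leaf y))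
      have hl2 : p.length = 2 := by rw [hl]; exact hM2
      exact walk_len_two p hl2
    have hSD2 : N'.SameDist (chReduce M hxy hMx hMy hne) := by
      have hGM : (chReduce M hxy hMx hMy hne).G =
          M.G.induce {w : W | w ≠ M.leaf x ∧ w ≠ M.leaf y} := rfl
      have hleafM : ∀ a : {a : X // a ≠ x ∧ a ≠ y},
          ((chReduce M hxy hMx hMy hne).leaf (Sum.inl a) : W) = M.leaf a.1 := fun a => rfl
      have hzM : ((chReduce M hxy hMx hMy hne).leaf (Sum.inr ()) : W) = w0 := rfl
      rintro (a | ⟨⟩) (b | ⟨⟩)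
      · rw [red_dm_inl N N' hG hleaf a b, red_dm_inl M _ hGM hleafM a b]
        exact hSD a.1 b.1
      · show N'.dm (Sum.inl a) (Sum.inr ()) = (chReduce M hxy hMx hMy hne).dm (Sum.inl a) (Sum.inr ())
        rw [dm_comm, dm_comm (chReduce M hxy hMx hMy hne)]
        have e1 := red_dm_zx N hx hy N' hG hleaf hz a
        have e2 := red_dm_zx M hMx hMy _ hGM hleafM hzM a
        have e3 := hSD x a.1
        omega
      · show N'.dm (Sum.inr ()) (Sum.inl b) = (chReduce M hxy hMx hMy hne).dm (Sum.inr ()) (Sum.inl b)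
        have e1 := red_dm_zx N hx hy N' hG hleaf hz b
        have e2 := red_dm_zx M hMx hMy _ hGM hleafM hzM b
        have e3 := hSD x b.1
        omega
      · show N'.dm (Sum.inr ()) (Sum.inr ()) = (chReduce M hxy hMx hMy hne).dm (Sum.inr ()) (Sum.inr ())
        rw [dm_self, dm_self]
    obtain ⟨φ', hφ'⟩ := hN' _ (chReduce M hxy hMx hMy hne) hSD2
    exact ext_isom N M hxy hx hy hMx hMy N' hG hleaf hz
      (chReduce M hxy hMx hMy hne) rfl (fun a => rfl) rfl φ' hφ'
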